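/- Let σ and ω be nonnegative locally finite Borel measures on ℝⁿ and let x, x₀ ∈ ℝⁿ. Then ∫_0^{|x−x₀|} ( r^{αs−n} ∫_{B(x,r/2)} ( ∫_r^∞ ( u^{αs−n} ω(B(y,u)) )^{1/(s−1)} du/u )^{s−1} dσ(y) )^{1/(s−1)} dr/r ≥ ∫_0^{|x−x₀|} ( σ(B(x,r/2))/r^{n−αs} )^{1/(s−1)} · ( ∫_r^∞ ( u^{αs−n} ω(B(x,u/2)) )^{1/(s−1)} du/u ) dr/r. -/
import Mathlib


open MeasureTheory Metric Set Filter
open scoped ENNReal NNReal Topology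

noncomputable section

/-- `n`-dimensional Euclidean space. -/
abbrev En (n : ℕ) : Type := EuclideanSpace ℝ (Fin n)

/-- The truncated Wolff potential
`W^ρ_{α,s} μ (x) = ∫_0^ρ (μ(B(x,r))/r^{n-αs})^{1/(s-1)} dr/r`. -/
noncomputable def wolffT (n : ℕ) (α s : ℝ) (μ : Measure (En n)) (ρ : ℝ) (x : En n) : ℝ≥0∞ :=
  ∫⁻ r in Set.Ioo (0:ℝ) ρ,
    (μ (Metric.ball x r) / ENNReal.ofReal (r ^ ((n:ℝ) - α * s))) ^ (1/(s-1))
      * ENNReal.ofReal r⁻¹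

/-- The (full) Wolff potential
`W_{α,s} μ (x) = ∫_0^∞ (μ(B(x,r))/r^{n-αs})^{1/(s-1)} dr/r`. -/
noncomputable def wolff (n : ℕ) (α s : ℝ) (μ : Measure (En n)) (x : En n) : ℝ≥0∞ :=
  ∫⁻ r in Set.Ioi (0:ℝ),
    (μ (Metric.ball x r) / ENNReal.ofReal (r ^ ((n:ℝ) - α * s))) ^ (1/(s-1))
      * ENNReal.ofReal r⁻¹

/-- The truncated Riesz-type potential
`I^ρ μ (x) = ∫_0^ρ (μ(B(x,r))/r^{n-αs}) dr/r`. -/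
noncomputable def rieszT (n : ℕ) (α s : ℝ) (μ : Measure (En n)) (ρ : ℝ) (x : En n) : ℝ≥0∞ :=
  ∫⁻ r in Set.Ioo (0:ℝ) ρ,
    (μ (Metric.ball x r) / ENNReal.ofReal (r ^ ((n:ℝ) - α * s))) * ENNReal.ofReal r⁻¹

/-- The nonlinear operator `𝒩 f (x) = W_{α,s}(f^{s-1} dσ)(x)`. -/
noncomputable def Nop (n : ℕ) (α s : ℝ) (σ : Measure (En n)) (f : En n → ℝ≥0∞) (x : En n) :
    ℝ≥0∞ :=
  ∫⁻ r in Set.Ioi (0:ℝ),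
    (ENNReal.ofReal (r ^ (α * s - (n:ℝ))) * ∫⁻ y in Metric.ball x r, (f y) ^ (s-1) ∂σ)
        ^ (1/(s-1))
      * ENNReal.ofReal r⁻¹

/-- The Riesz potential `I_α f (x) = (n-α)⁻¹ ∫ f(y) |x-y|^{α-n} dy`. -/
noncomputable def rieszPot (n : ℕ) (α : ℝ) (f : En n → ℝ≥0∞) (x : En n) : ℝ≥0∞ :=
  ENNReal.ofReal (((n:ℝ) - α)⁻¹) * ∫⁻ y, f y * ENNReal.ofReal (‖x - y‖ ^ (α - (n:ℝ)))

/-- The Riesz capacity `cap_{α,s}(A) = inf { ∫ f^s : f ≥ 0, I_α f ≥ 1 on A }`. -/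
noncomputable def rieszCap (n : ℕ) (α s : ℝ) (A : Set (En n)) : ℝ≥0∞ :=
  ⨅ (f : En n → ℝ≥0∞) (_ : Measurable f) (_ : ∀ x ∈ A, 1 ≤ rieszPot n α f x),
    ∫⁻ y, (f y) ^ s

/-- Extended exponential: `eexp x = exp x` for finite `x`, with `eexp ∞ = ∞`. -/
noncomputable def eexp (x : ℝ≥0∞) : ℝ≥0∞ :=
  if x = ∞ then ∞ else ENNReal.ofReal (Real.exp x.toReal)

/-- the claim (5.10) in the paper: for nonnegative locally finite Borel
measures `σ, ω` and `x, x₀ ∈ ℝⁿ`,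
`∫_0^{|x-x₀|} (r^{αs-n} ∫_{B(x,r/2)} (∫_r^∞ (u^{αs-n} ω(B(y,u)))^{1/(s-1)} du/u)^{s-1} dσ(y))^{1/(s-1)} dr/r`
`≥ ∫_0^{|x-x₀|} (σ(B(x,r/2))/r^{n-αs})^{1/(s-1)} (∫_r^∞ (u^{αs-n} ω(B(x,u/2)))^{1/(s-1)} du/u) dr/r`. -/
theorem statement10 (n : ℕ) (hn : 2 ≤ n) (α s : ℝ) (hs : 1 < s) (hα : 0 < α)
    (hαs : α * s < n)
    (σ ω : Measure (En n)) [IsLocallyFiniteMeasure σ] [IsLocallyFiniteMeasure ω]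
    (x x₀ : En n) :
    (∫⁻ r in Set.Ioo (0:ℝ) ‖x - x₀‖,
        (σ (Metric.ball x (r/2)) / ENNReal.ofReal (r ^ ((n:ℝ) - α*s))) ^ (1/(s-1))
          * (∫⁻ t in Set.Ioi r,
              (ENNReal.ofReal (t ^ (α*s-(n:ℝ))) * ω (Metric.ball x (t/2))) ^ (1/(s-1))
                * ENNReal.ofReal t⁻¹)
          * ENNReal.ofReal r⁻¹)
      ≤ ∫⁻ r in Set.Ioo (0:ℝ) ‖x - x₀‖,
          (ENNReal.ofReal (r ^ (α*s-(n:ℝ)))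
              * ∫⁻ y in Metric.ball x (r/2),
                  (∫⁻ t in Set.Ioi r,
                    (ENNReal.ofReal (t ^ (α*s-(n:ℝ))) * ω (Metric.ball y t)) ^ (1/(s-1))
                      * ENNReal.ofReal t⁻¹) ^ (s-1) ∂σ) ^ (1/(s-1))
            * ENNReal.ofReal r⁻¹ := by
  have hs1 : (0:ℝ) < s - 1 := by linarith
  refine setLIntegral_mono' measurableSet_Ioo fun r hr => ?_
  obtain ⟨hr0, -⟩ := hr
  set A := ENNReal.ofReal (r ^ (α*s-(n:ℝ))) with hA
  set C := ∫⁻ t in Set.Ioi r,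
      (ENNReal.ofReal (t ^ (α*s-(n:ℝ))) * ω (Metric.ball x (t/2))) ^ (1/(s-1))
        * ENNReal.ofReal t⁻¹ with hCdef
  gcongr ?_ * _
  have hdiv : σ (Metric.ball x (r/2)) / ENNReal.ofReal (r ^ ((n:ℝ) - α*s))
      = A * σ (Metric.ball x (r/2)) := by
    rw [ENNReal.div_eq_inv_mul, hA]
    congr 1
    rw [← ENNReal.ofReal_inv_of_pos (Real.rpow_pos_of_pos hr0 _),
      ← Real.rpow_neg hr0.le]
    ring_nf
  have hCy : ∀ y ∈ Metric.ball x (r/2), C ≤ ∫⁻ t in Set.Ioi r,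
      (ENNReal.ofReal (t ^ (α*s-(n:ℝ))) * ω (Metric.ball y t)) ^ (1/(s-1))
        * ENNReal.ofReal t⁻¹ := by
    intro y hy
    refine setLIntegral_mono' measurableSet_Ioi fun t ht => ?_
    have hsub : Metric.ball x (t/2) ⊆ Metric.ball y t := by
      intro z hz
      have h1 : dist z x < t/2 := Metric.mem_ball.mp hz
      have h2 : dist y x < r/2 := Metric.mem_ball.mp hy
      have hrt : r < t := ht
      have : dist z y ≤ dist z x + dist x y := dist_triangle z x y
      rw [dist_comm x y] at this
      exact Metric.mem_ball.mpr (by linarith)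
    gcongr
  have hkey : (A * σ (Metric.ball x (r/2))) ^ (1/(s-1)) * C
      = (A * (σ (Metric.ball x (r/2)) * C ^ (s-1))) ^ (1/(s-1)) := by
    rw [ENNReal.mul_rpow_of_nonneg _ _ (by positivity),
      ENNReal.mul_rpow_of_nonneg _ _ (by positivity),
      ENNReal.mul_rpow_of_nonneg _ _ (by positivity),
      ← ENNReal.rpow_mul, mul_one_div, div_self hs1.ne', ENNReal.rpow_one, mul_assoc]
  rw [hdiv, hkey]
  gcongr
  calc σ (Metric.ball x (r/2)) * C ^ (s-1)
      = ∫⁻ _ in Metric.ball x (r/2), C ^ (s-1) ∂σ := by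
        rw [setLIntegral_const, mul_comm]
    _ ≤ _ := setLIntegral_mono' measurableSet_ball fun y hy =>
        ENNReal.rpow_le_rpow (hCy y hy) hs1.le
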